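/- Let T be a closed, symmetric, G-invariant operator with equal deficiency indices, and let T_K be the self-adjoint extension defined by a unitary K : N₊ → N₋. If T_K is G-invariant, then K commutes with the group action: V(g)Kξ = K V(g)ξ for all ξ ∈ N₊, g ∈ G. -/
import Mathlib


open scoped InnerProductSpace
open LinearPMap

/-- `G`-invariance of a (possibly unbounded) operator `T` with respect to a unitary
representation `V`. -/
def GInvariant {H : Type*} [NormedAddCommGroup H] [InnerProductSpace ℂ H]
    {G : Type*} [Group G] (V : G →* (H ≃ₗᵢ[ℂ] H)) (T : H →ₗ.[ℂ] H) : Prop :=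
  ∀ g : G, ∀ x : T.domain, ∃ hx : V g (x : H) ∈ T.domain,
    T ⟨V g (x : H), hx⟩ = V g (T x)

/-- The deficiency space `ker (T† - c)` of an unbounded operator, as a set. -/
def deficiencySpace {H : Type*} [NormedAddCommGroup H] [InnerProductSpace ℂ H]
    [CompleteSpace H] (T : H →ₗ.[ℂ] H) (c : ℂ) : Set H :=
  {φ : H | ∃ hφ : φ ∈ T.adjoint.domain, T.adjoint ⟨φ, hφ⟩ = c • φ}

/-- The adjoint of a `G`-invariant operator commutes with the representation. -/
theorem adjoint_GInvariant_aux {H : Type*} [NormedAddCommGroup H] [InnerProductSpace ℂ H]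
    [CompleteSpace H] {G : Type*} [Group G] (V : G →* (H ≃ₗᵢ[ℂ] H)) (T : H →ₗ.[ℂ] H)
    (hdense : Dense (T.domain : Set H)) (hinv : GInvariant V T)
    (g : G) (ψ : H) (hψ : ψ ∈ T.adjoint.domain) :
    ∃ h : V g ψ ∈ T.adjoint.domain,
      T.adjoint ⟨V g ψ, h⟩ = V g (T.adjoint ⟨ψ, hψ⟩) := by
  have key : ∀ x : T.domain, ⟪V g (T.adjoint ⟨ψ, hψ⟩), (x : H)⟫_ℂ = ⟪V g ψ, T x⟫_ℂ := by
    intro x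
    obtain ⟨hx, hx2⟩ := hinv g⁻¹ x
    have h1 : ⟪V g ψ, T x⟫_ℂ = ⟪ψ, V g⁻¹ (T x)⟫_ℂ := by
      conv_lhs => rw [show T x = V g (V g⁻¹ (T x)) by rw [map_inv]; simp]
      rw [LinearIsometryEquiv.inner_map_map]
    rw [h1, ← hx2,
      ← (adjoint_isFormalAdjoint hdense (T := T)) ⟨ψ, hψ⟩ ⟨V g⁻¹ (x : H), hx⟩]
    conv_lhs => rw [show (x : H) = V g (V g⁻¹ (x : H)) by rw [map_inv]; simp]
    rw [LinearIsometryEquiv.inner_map_map]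
  have hmem : V g ψ ∈ T.adjoint.domain :=
    T.mem_adjoint_domain_of_exists _ ⟨V g (T.adjoint ⟨ψ, hψ⟩), key⟩
  exact ⟨hmem, adjoint_apply_eq hdense _ key⟩

/-- Range orthogonality: `(T - c̄)φ ⟂ ker (T† - c)`. -/
theorem orth_aux {H : Type*} [NormedAddCommGroup H] [InnerProductSpace ℂ H]
    [CompleteSpace H] (T : H →ₗ.[ℂ] H) (hdense : Dense (T.domain : Set H))
    (φ : T.domain) (c : ℂ) (ζ : H) (hζ : ζ ∈ T.adjoint.domain)
    (hζc : T.adjoint ⟨ζ, hζ⟩ = c • ζ) :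
    ⟪(T φ : H) - (starRingEnd ℂ c) • (φ : H), ζ⟫_ℂ = 0 := by
  have h1 : ⟪(T φ : H), ζ⟫_ℂ = ⟪(φ : H), (T.adjoint ⟨ζ, hζ⟩ : H)⟫_ℂ :=
    (adjoint_isFormalAdjoint hdense (T := T)).symm φ ⟨ζ, hζ⟩
  rw [inner_sub_left, h1, hζc, inner_smul_left, inner_smul_right, Complex.conj_conj, sub_self]

/-- Von Neumann theory: let `T` be closed, symmetric and `G`-invariant, let
`K : N₊ → N₋` be a unitary between the deficiency spaces and `T_K` the corresponding
self-adjoint extension (the restriction of `T†` to `D(T) + (I + K) N₊`).  If `T_K`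
is `G`-invariant, then `K` commutes with the representation `V`. -/
theorem vonNeumann_extension_GInvariant_necessary {H : Type*} [NormedAddCommGroup H]
    [InnerProductSpace ℂ H] [CompleteSpace H] {G : Type*} [Group G]
    (V : G →* (H ≃ₗᵢ[ℂ] H)) (T : H →ₗ.[ℂ] H)
    (hdense : Dense (T.domain : Set H)) (hclosed : T.IsClosed)
    (hsymm : ∀ x y : T.domain, ⟪T x, (y : H)⟫_ℂ = ⟪(x : H), T y⟫_ℂ)
    (hinv : GInvariant V T)
    (Np Nm : Submodule ℂ H)
    (hNp : (Np : Set H) = deficiencySpace T Complex.I)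
    (hNm : (Nm : Set H) = deficiencySpace T (-Complex.I))
    (K : Np ≃ₗᵢ[ℂ] Nm)
    (TK : H →ₗ.[ℂ] H)
    -- `D(T_K) = {φ + ξ + Kξ : φ ∈ D(T), ξ ∈ N₊}`
    (hTKdom : ∀ x : H, x ∈ TK.domain ↔
      ∃ φ ∈ T.domain, ∃ ξ : Np, x = φ + (ξ : H) + (K ξ : H))
    -- `T_K` is the restriction of `T†` to this domain
    (hTKval : ∀ x : TK.domain, ∃ hx : (x : H) ∈ T.adjoint.domain,
      TK x = T.adjoint ⟨(x : H), hx⟩)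
    -- `T_K` is `G`-invariant
    (hTKinv : GInvariant V TK) :
    -- then `K` commutes with the representation `V`
    ∀ g : G, ∀ ξ : Np, ∃ hξ : V g (ξ : H) ∈ Np,
      V g (K ξ : H) = (K ⟨V g (ξ : H), hξ⟩ : H) := by
  have hle : T ≤ T.adjoint := IsFormalAdjoint.le_adjoint hdense hsymm
  have memNp : ∀ ζ : Np, ∃ h : (ζ : H) ∈ T.adjoint.domain,
      T.adjoint ⟨(ζ : H), h⟩ = Complex.I • (ζ : H) := fun ζ => by
    have : (ζ : H) ∈ deficiencySpace T Complex.I := hNp ▸ ζ.2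
    exact this
  have memNm : ∀ ζ : Nm, ∃ h : (ζ : H) ∈ T.adjoint.domain,
      T.adjoint ⟨(ζ : H), h⟩ = (-Complex.I) • (ζ : H) := fun ζ => by
    have : (ζ : H) ∈ deficiencySpace T (-Complex.I) := hNm ▸ ζ.2
    exact this
  intro g ξ
  -- V g preserves the deficiency spaces
  obtain ⟨hξad, hξval⟩ := memNp ξ
  obtain ⟨hKξad, hKξval⟩ := memNm (K ξ)
  have hVξNp : V g (ξ : H) ∈ Np := by
    obtain ⟨had, hval2⟩ := adjoint_GInvariant_aux V T hdense hinv g _ hξad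
    show V g (ξ : H) ∈ (Np : Set H)
    rw [hNp]
    exact ⟨had, by rw [hval2, hξval, _root_.map_smul]⟩
  have hVKξNm : V g (K ξ : H) ∈ Nm := by
    obtain ⟨had, hval2⟩ := adjoint_GInvariant_aux V T hdense hinv g _ hKξad
    show V g (K ξ : H) ∈ (Nm : Set H)
    rw [hNm]
    exact ⟨had, by rw [hval2, hKξval, _root_.map_smul]⟩
  -- the element ξ + Kξ of D(T_K)
  set x : H := (ξ : H) + (K ξ : H) with hxdef
  have hx : x ∈ TK.domain := (hTKdom x).mpr ⟨0, T.domain.zero_mem, ξ,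
    by rw [zero_add]⟩
  obtain ⟨hVx, hval⟩ := hTKinv g ⟨x, hx⟩
  obtain ⟨φ, hφ, η, hdec⟩ := (hTKdom (V g x)).mp hVx
  obtain ⟨hηad, hηval⟩ := memNp η
  obtain ⟨hKηad, hKηval⟩ := memNm (K η)
  obtain ⟨hxad, hxval⟩ := hTKval ⟨x, hx⟩
  obtain ⟨hyad, hyval⟩ := hTKval ⟨V g x, hVx⟩
  have hφ' : φ ∈ T.adjoint.domain := hle.1 hφ
  have hφval : T ⟨φ, hφ⟩ = T.adjoint ⟨φ, hφ'⟩ := hle.2 rfl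
  have hxsplit : (⟨x, hxad⟩ : T.adjoint.domain)
      = ⟨(ξ : H), hξad⟩ + ⟨(K ξ : H), hKξad⟩ := Subtype.ext rfl
  have hysplit : (⟨V g x, hyad⟩ : T.adjoint.domain)
      = ⟨φ, hφ'⟩ + ⟨(η : H), hηad⟩ + ⟨(K η : H), hKηad⟩ := Subtype.ext hdec
  have hc : (T ⟨φ, hφ⟩ : H) + Complex.I • (η : H) + (-Complex.I) • (K η : H)
      = Complex.I • (V g (ξ : H)) + (-Complex.I) • (V g (K ξ : H)) := by
    have h := hval
    rw [hyval, hxval, hysplit, hxsplit, LinearPMap.map_add, LinearPMap.map_add,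
      LinearPMap.map_add] at h
    rw [← hφval, hηval, hKηval, hξval, hKξval] at h
    rw [_root_.map_add, _root_.map_smul, _root_.map_smul] at h
    exact h
  have e1 : V g (ξ : H) + V g (K ξ : H) = φ + (η : H) + (K η : H) := by
    rw [← _root_.map_add]; exact hdec
  set ζp : H := V g (ξ : H) - (η : H) with hζpdef
  set ζm : H := V g (K ξ : H) - (K η : H) with hζmdef
  have hζpNp : ζp ∈ Np := Np.sub_mem hVξNp η.2
  have hζmNm : ζm ∈ Nm := Nm.sub_mem hVKξNm (K η).2
  have eq1 : ζp + ζm = φ := by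
    rw [hζpdef, hζmdef, sub_add_sub_comm, e1]; abel
  have eq2 : Complex.I • ζp - Complex.I • ζm = (T ⟨φ, hφ⟩ : H) := by
    have hrw : Complex.I • ζp - Complex.I • ζm
        = (Complex.I • (V g (ξ : H)) + (-Complex.I) • (V g (K ξ : H)))
          - (Complex.I • (η : H) + (-Complex.I) • (K η : H)) := by
      rw [hζpdef, hζmdef]
      simp only [smul_sub, neg_smul]; abel
    rw [hrw, ← hc]; abel
  -- ζp = 0
  obtain ⟨hζpad, hζpval⟩ := memNp ⟨ζp, hζpNp⟩
  obtain ⟨hζmad, hζmval⟩ := memNm ⟨ζm, hζmNm⟩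
  have hζp0 : ζp = 0 := by
    have h0 := orth_aux T hdense ⟨φ, hφ⟩ Complex.I ζp hζpad hζpval
    rw [Complex.conj_I, neg_smul, sub_neg_eq_add] at h0
    rw [show ((⟨φ, hφ⟩ : T.domain) : H) = ζp + ζm from eq1.symm, ← eq2] at h0
    have hrw : (Complex.I • ζp - Complex.I • ζm) + Complex.I • (ζp + ζm)
        = Complex.I • ζp + Complex.I • ζp := by
      simp only [smul_add]; abel
    rw [hrw, inner_add_left, inner_smul_left, Complex.conj_I] at h0
    have ha : ⟪ζp, ζp⟫_ℂ = 0 := by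
      have h2 : (-Complex.I) * (2 * ⟪ζp, ζp⟫_ℂ) = 0 := by linear_combination h0
      rcases mul_eq_zero.mp h2 with h | h
      · exact absurd (neg_eq_zero.mp h) Complex.I_ne_zero
      · rcases mul_eq_zero.mp h with h' | h'
        · norm_num at h'
        · exact h'
    exact inner_self_eq_zero.mp ha
  have hζm0 : ζm = 0 := by
    have h0 := orth_aux T hdense ⟨φ, hφ⟩ (-Complex.I) ζm hζmad hζmval
    rw [Complex.conj_neg_I] at h0
    rw [show ((⟨φ, hφ⟩ : T.domain) : H) = ζp + ζm from eq1.symm, ← eq2] at h0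
    have hrw : (Complex.I • ζp - Complex.I • ζm) - Complex.I • (ζp + ζm)
        = -(Complex.I • ζm) + -(Complex.I • ζm) := by
      simp only [smul_add]; abel
    rw [hrw, inner_add_left, inner_neg_left, inner_smul_left, Complex.conj_I] at h0
    have ha : ⟪ζm, ζm⟫_ℂ = 0 := by
      have h2 : Complex.I * (2 * ⟪ζm, ζm⟫_ℂ) = 0 := by linear_combination h0
      rcases mul_eq_zero.mp h2 with h | h
      · exact absurd h Complex.I_ne_zero
      · rcases mul_eq_zero.mp h with h' | h'
        · norm_num at h'
        · exact h'
    exact inner_self_eq_zero.mp ha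
  have hη : η = ⟨V g (ξ : H), hVξNp⟩ := by
    apply Subtype.ext
    have := sub_eq_zero.mp hζp0
    exact this.symm
  refine ⟨hVξNp, ?_⟩
  have hKη : (K η : H) = V g (K ξ : H) := (sub_eq_zero.mp hζm0).symm
  rw [← hKη, hη]
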